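/- Let G be a formal power series in x, y_1, …, y_t over ℚ with zero constant term satisfying G = x·∏_{i=1}^{t}(1 + y_i·G), and let m be an integer with 1 ≤ m ≤ t. Then for every integer n ≥ m and every tuple of natural numbers (a_1, …, a_t) with a_1 + ⋯ + a_t = n and a_i ≥ 1 for all 1 ≤ i ≤ m, the coefficient of x^n·y_1^{a_1}⋯y_t^{a_t} in the series y_1·y_2⋯y_m·G^m equals (m/n)·C(n,a_1−1)⋯C(n,a_m−1)·C(n,a_{m+1})⋯C(n,a_t), where C(n,k) denotes the binomial coefficient. -/

import Mathlib

open Finset MvPowerSeries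


open Finset

/-- Vandermonde with indicator, summed over `range (m+1)`. -/
lemma vand (m M B : ℕ) :
    ∑ k ∈ range (m+1), m.choose k * (if k ≤ B then M.choose (B-k) else 0)
      = (m+M).choose B := by
  set f : ℕ → ℕ := fun k => m.choose k * (if k ≤ B then M.choose (B-k) else 0) with hf
  have e1 : ∑ k ∈ range (m+1), f k = ∑ k ∈ range (max m B + 1), f k := by
    apply Finset.sum_subset (Finset.range_subset_range.2 (by omega))
    intro k _ hk
    simp only [hf]
    rw [Nat.choose_eq_zero_of_lt (by simp only [Finset.mem_range] at hk; omega), zero_mul]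
  have e2 : ∑ k ∈ range (B+1), m.choose k * M.choose (B-k)
      = ∑ k ∈ range (max m B + 1), f k := by
    have e2a : ∑ k ∈ range (B+1), f k = ∑ k ∈ range (max m B + 1), f k := by
      apply Finset.sum_subset (Finset.range_subset_range.2 (by omega))
      intro k hk hk'
      simp only [hf]
      rw [if_neg (by simp only [Finset.mem_range] at hk'; omega), mul_zero]
    rw [← e2a]
    apply Finset.sum_congr rfl
    intro k hk
    simp only [hf]
    rw [if_pos (by simp only [Finset.mem_range] at hk; omega)]
  rw [e1, Nat.add_choose_eq, Finset.Nat.sum_antidiagonal_eq_sum_range_succ_mk, ← e2]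

lemma vand' (m M B : ℕ) (hm : 1 ≤ m) :
    ∑ k ∈ range (m+1), k * (m.choose k * (if k ≤ B then M.choose (B-k) else 0))
      = m * (if 1 ≤ B then (m-1+M).choose (B-1) else 0) := by
  rw [Finset.sum_range_succ']
  simp only [zero_mul, add_zero]
  have key : ∀ k, (k+1) * (m.choose (k+1) * (if k+1 ≤ B then M.choose (B-(k+1)) else 0))
      = m * ((m-1).choose k * (if k+1 ≤ B then M.choose (B-(k+1)) else 0)) := by
    intro k
    have h := Nat.add_one_mul_choose_eq (m-1) k
    rw [Nat.sub_add_cancel hm] at h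
    rw [← mul_assoc, mul_comm (k+1) (m.choose (k+1)), ← h, mul_assoc]
  rw [Finset.sum_congr rfl (fun k _ => key k), ← Finset.mul_sum]
  congr 1
  cases B with
  | zero =>
    simp only [Nat.not_succ_le_zero, if_false, mul_zero, Nat.lt_irrefl, Nat.le_zero]
    rw [if_neg (by omega)]
    exact Finset.sum_eq_zero fun k _ => rfl
  | succ B =>
    rw [if_pos (by omega), Nat.succ_sub_one, ← vand (m-1) M B,
      show m = (m-1)+1 by omega]
    simp only [Nat.add_sub_cancel]
    apply Finset.sum_congr rfl
    intro k _
    congr 1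
    by_cases h : k ≤ B
    · rw [if_pos (by omega), if_pos h, Nat.succ_sub_succ]
    · rw [if_neg (by omega), if_neg h]

section Eexp
variable {t : ℕ}

/-- The exponent `x^n y^b` as a finitely supported function. -/
noncomputable def E (t : ℕ) (n : ℕ) (b : Fin t → ℕ) : Fin (t+1) →₀ ℕ :=
  Finsupp.equivFunOnFinite.symm (Fin.cons n b)

@[simp] lemma E_apply_zero (n : ℕ) (b : Fin t → ℕ) : E t n b 0 = n := rfl

@[simp] lemma E_apply_succ (n : ℕ) (b : Fin t → ℕ) (i : Fin t) :
    E t n b i.succ = b i := by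
  simp [E]

lemma E_eq_sum (q : ℕ) (k : Fin t → ℕ) :
    E t q k = Finsupp.single 0 q + ∑ i : Fin t, Finsupp.single i.succ (k i) := by
  ext j
  rw [Finsupp.add_apply, Finsupp.finset_sum_apply]
  induction j using Fin.cases with
  | zero =>
    rw [E_apply_zero, Finsupp.single_eq_same]
    rw [Finset.sum_eq_zero fun i _ => Finsupp.single_eq_of_ne' (Fin.succ_ne_zero i), add_zero]
  | succ i =>
    rw [E_apply_succ, Finsupp.single_eq_of_ne' (Fin.succ_ne_zero i).symm, zero_add]
    rw [Finset.sum_eq_single i (fun j _ hj =>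
      Finsupp.single_eq_of_ne' (fun h => hj (Fin.succ_injective _ h)))
      (fun h => absurd (Finset.mem_univ i) h), Finsupp.single_eq_same]

lemma E_le_iff (q n : ℕ) (k b : Fin t → ℕ) :
    E t q k ≤ E t n b ↔ q ≤ n ∧ ∀ i, k i ≤ b i := by
  rw [Finsupp.le_def]
  constructor
  · intro h
    exact ⟨by simpa using h 0, fun i => by simpa using h i.succ⟩
  · intro ⟨h0, hs⟩ j
    induction j using Fin.cases with
    | zero => simpa using h0
    | succ i => simpa using hs i

lemma E_sub (q n : ℕ) (k b : Fin t → ℕ) :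
    E t n b - E t q k = E t (n - q) (fun i => b i - k i) := by
  ext j
  rw [Finsupp.tsub_apply]
  induction j using Fin.cases with
  | zero => simp
  | succ i => simp

lemma E_eq_zero_iff (n : ℕ) (b : Fin t → ℕ) :
    E t n b = 0 ↔ n = 0 ∧ ∀ i, b i = 0 := by
  rw [Finsupp.ext_iff]
  constructor
  · intro h
    exact ⟨by simpa using h 0, fun i => by simpa using h i.succ⟩
  · intro ⟨h0, hs⟩ j
    induction j using Fin.cases with
    | zero => simpa using h0
    | succ i => simpa using hs i

/-- A product of powers of the variables is a monomial. -/
lemma mono_prod (q : ℕ) (k : Fin t → ℕ) :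
    (X 0 : MvPowerSeries (Fin (t+1)) ℚ) ^ q * ∏ i : Fin t, (X i.succ) ^ (k i)
      = monomial (E t q k) 1 := by
  have hs : ∀ s : Finset (Fin t), ∏ i ∈ s, (X i.succ : MvPowerSeries (Fin (t+1)) ℚ) ^ (k i)
      = monomial (∑ i ∈ s, Finsupp.single i.succ (k i)) 1 := by
    intro s
    induction s using Finset.induction with
    | empty => simp [monomial_zero_one]
    | insert _ _ hx ih =>
      rw [Finset.prod_insert hx, Finset.sum_insert hx, ih, X_pow_eq,
        monomial_mul_monomial, one_mul]
  rw [hs, X_pow_eq, monomial_mul_monomial, one_mul, E_eq_sum]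

end Eexp

section Main

variable {t : ℕ} (G : MvPowerSeries (Fin (t+1)) ℚ)

/-- The basic recurrence obtained by expanding the functional equation. -/
lemma coeff_rec (hG : G = X 0 * ∏ i : Fin t, (1 + X i.succ * G))
    (m n : ℕ) (b : Fin t → ℕ) :
    MvPowerSeries.coeff (E t n b) (G ^ m) =
      ∑ K ∈ Fintype.piFinset (fun _ : Fin t => range (m+1)),
        (∏ i, (m.choose (K i) : ℚ)) *
          (if m ≤ n ∧ ∀ i, K i ≤ b i
            then MvPowerSeries.coeff (E t (n-m) (fun i => b i - K i)) (G ^ (∑ i, K i))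
            else 0) := by
  conv_lhs => rw [hG]
  rw [mul_pow, ← Finset.prod_pow]
  have expand : ∀ i : Fin t, (1 + X i.succ * G) ^ m
      = ∑ k ∈ range (m+1),
          (X i.succ : MvPowerSeries (Fin (t+1)) ℚ) ^ k * G ^ k * (m.choose k : MvPowerSeries (Fin (t+1)) ℚ) := by
    intro i
    rw [add_comm (1 : MvPowerSeries (Fin (t+1)) ℚ), add_pow]
    exact Finset.sum_congr rfl fun k _ => by rw [mul_pow, one_pow, mul_one]
  rw [Finset.prod_congr rfl fun i _ => expand i, Finset.prod_univ_sum, Finset.mul_sum,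
    map_sum]
  apply Finset.sum_congr rfl
  intro K _
  have split : ∀ i : Fin t,
      (X i.succ : MvPowerSeries (Fin (t+1)) ℚ) ^ (K i) * G ^ (K i) * (m.choose (K i) : MvPowerSeries (Fin (t+1)) ℚ)
      = ((X i.succ : MvPowerSeries (Fin (t+1)) ℚ) ^ (K i)) * (G ^ (K i)) * ((C (σ := Fin (t+1)) (R := ℚ)) (m.choose (K i) : ℚ)) := by
    intro i
    rw [map_natCast ((C (σ := Fin (t+1)) (R := ℚ))) (m.choose (K i))]
  rw [Finset.prod_congr rfl fun i _ => split i, Finset.prod_mul_distrib,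
    Finset.prod_mul_distrib]
  rw [Finset.prod_pow_eq_pow_sum]
  rw [show (X 0 : MvPowerSeries (Fin (t+1)) ℚ) ^ m *
      ((∏ i : Fin t, (X i.succ : MvPowerSeries (Fin (t+1)) ℚ) ^ (K i)) * G ^ (∑ i, K i) *
        ∏ i : Fin t, (C (σ := Fin (t+1)) (R := ℚ)) (m.choose (K i) : ℚ))
    = (∏ i : Fin t, (C (σ := Fin (t+1)) (R := ℚ)) (m.choose (K i) : ℚ)) *
        ((X 0 ^ m * ∏ i : Fin t, (X i.succ : MvPowerSeries (Fin (t+1)) ℚ) ^ (K i)) * G ^ (∑ i, K i)) by ring]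
  rw [← map_prod ((C (σ := Fin (t+1)) (R := ℚ))), mono_prod, MvPowerSeries.coeff_C_mul,
    MvPowerSeries.coeff_monomial_mul]
  congr 1
  exact if_congr (E_le_iff m n K b) (by rw [one_mul, E_sub]) rfl

end Main

section Key

/-- The per-coordinate weight appearing after expanding the recurrence. -/
def gfun (m M B : ℕ) (k : ℕ) : ℚ :=
  (m.choose k : ℚ) * (if k ≤ B then (M.choose (B - k) : ℚ) else 0)

lemma gfun_sum (m M B : ℕ) :
    ∑ k ∈ range (m+1), gfun m M B k = ((m+M).choose B : ℚ) := by
  rw [← vand m M B]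
  push_cast [apply_ite (fun x : ℕ => (x : ℚ))]
  simp [gfun]

lemma gfun_sum' (m M B : ℕ) (hm : 1 ≤ m) :
    ∑ k ∈ range (m+1), (k : ℚ) * gfun m M B k
      = (m : ℚ) * (if 1 ≤ B then ((m-1+M).choose (B-1) : ℚ) else 0) := by
  have h := congrArg (fun x : ℕ => (x : ℚ)) (vand' m M B hm)
  push_cast [apply_ite (fun x : ℕ => (x : ℚ))] at h
  rw [← h]
  push_cast [apply_ite (fun x : ℕ => (x : ℚ))]
  simp [gfun, mul_assoc]

variable {t : ℕ} (G : MvPowerSeries (Fin (t+1)) ℚ)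

lemma key (hG : G = X 0 * ∏ i : Fin t, (1 + X i.succ * G)) :
    ∀ n m : ℕ, 1 ≤ m → ∀ b : Fin t → ℕ,
      MvPowerSeries.coeff (E t n b) (G ^ m) =
        if (∑ i, b i) + m = n then (m / n : ℚ) * ∏ i, (n.choose (b i) : ℚ) else 0 := by
  intro n
  induction n using Nat.strong_induction_on with
  | _ n IH =>
  intro m hm b
  rw [coeff_rec G hG m n b]
  by_cases hmn : m ≤ n
  case neg =>
    rw [if_neg (by omega)]
    exact Finset.sum_eq_zero fun K _ => by rw [if_neg (fun h => hmn h.1), mul_zero]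
  case pos =>
  by_cases hS : (∑ i, b i) + m = n
  case neg =>
    rw [if_neg hS]
    apply Finset.sum_eq_zero
    intro K _
    by_cases hKb : ∀ i, K i ≤ b i
    case neg => rw [if_neg (fun h => hKb h.2), mul_zero]
    case pos =>
    rw [if_pos ⟨hmn, hKb⟩]
    by_cases hK0 : ∑ i, K i = 0
    · rw [hK0, pow_zero, MvPowerSeries.coeff_one, if_neg, mul_zero]
      rw [E_eq_zero_iff]
      rintro ⟨h1, h2⟩
      apply hS
      have hKz : ∀ i, K i = 0 := fun i => (Finset.sum_eq_zero_iff.1 hK0) i (Finset.mem_univ i)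
      have hbz : ∀ i, b i = 0 := fun i => by have := h2 i; have := hKz i; omega
      have hsb : ∑ i, b i = 0 := Finset.sum_eq_zero fun i _ => hbz i
      omega
    · rw [IH (n-m) (by omega) (∑ i, K i) (by omega) _, if_neg, mul_zero]
      rw [Finset.sum_tsub_distrib Finset.univ fun i _ => hKb i]
      have hKle : ∑ i, K i ≤ ∑ i, b i := Finset.sum_le_sum fun i _ => hKb i
      omega
  case pos =>
  rw [if_pos hS]
  by_cases hnm : n = m
  case pos =>
    -- n = m, so b = 0
    have hb : ∀ i, b i = 0 := by
      intro i
      have h0 : ∑ i, b i = 0 := by omega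
      exact (Finset.sum_eq_zero_iff.1 h0) i (Finset.mem_univ i)
    rw [Finset.sum_eq_single_of_mem (fun _ : Fin t => 0)
      (by simp [Fintype.mem_piFinset])
      (fun K _ hK => ?_)]
    · rw [if_pos ⟨hmn, fun i => Nat.zero_le _⟩]
      have hE : E t (n - m) (fun i => b i - 0) = 0 :=
        (E_eq_zero_iff _ _).2 ⟨by omega, fun i => by rw [hb i]⟩
      rw [Finset.sum_const_zero, pow_zero, hE, MvPowerSeries.coeff_zero_one]
      have h1 : ∀ i : Fin t, (m.choose 0 : ℚ) = 1 := fun i => by simp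
      rw [Finset.prod_congr rfl fun i _ => h1 i, Finset.prod_const_one, mul_one]
      have h2 : ∀ i : Fin t, (n.choose (b i) : ℚ) = 1 := fun i => by simp [hb i, hnm]
      rw [Finset.prod_congr rfl fun i _ => h2 i, Finset.prod_const_one, mul_one,
        hnm, div_self (Nat.cast_ne_zero.2 (by omega) : (m:ℚ) ≠ 0)]
    · have hne : ¬ ∀ i, K i ≤ b i := by
        intro hall
        apply hK
        funext i
        have := hall i
        rw [hb i] at this
        omega
      rw [if_neg (fun h => hne h.2), mul_zero]
  case neg =>
  -- main case : n > m
  have hMn : m < n := lt_of_le_of_ne hmn (Ne.symm hnm)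
  have hM1 : 1 ≤ n - m := by omega
  have hbM : ∑ i, b i = n - m := by omega
  have hMne : ((n - m : ℕ) : ℚ) ≠ 0 := Nat.cast_ne_zero.2 (by omega)
  have hnne : ((n : ℕ) : ℚ) ≠ 0 := Nat.cast_ne_zero.2 (by omega)
  -- Step 1 : pointwise identification of the summand
  have step1 : ∀ K ∈ Fintype.piFinset (fun _ : Fin t => range (m+1)),
      (∏ i, (m.choose (K i) : ℚ)) *
        (if m ≤ n ∧ ∀ i, K i ≤ b i
          then MvPowerSeries.coeff (E t (n-m) (fun i => b i - K i)) (G ^ (∑ i, K i))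
          else 0)
      = ((∑ i, (K i : ℚ)) / ((n - m : ℕ) : ℚ)) * ∏ i, gfun m (n-m) (b i) (K i) := by
    intro K _
    by_cases hKb : ∀ i, K i ≤ b i
    case neg =>
      rw [if_neg (fun h => hKb h.2), mul_zero]
      push_neg at hKb
      obtain ⟨i, hi⟩ := hKb
      rw [Finset.prod_eq_zero (Finset.mem_univ i)
        (by rw [gfun, if_neg (by omega), mul_zero]), mul_zero]
    case pos =>
    rw [if_pos ⟨hmn, hKb⟩]
    by_cases hK0 : ∑ i, K i = 0
    · rw [hK0, pow_zero, MvPowerSeries.coeff_one, if_neg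
        (fun h => by have := ((E_eq_zero_iff _ _).1 h).1; omega), mul_zero]
      have hz : ∀ i, (K i : ℚ) = 0 := fun i => by
        have := (Finset.sum_eq_zero_iff.1 hK0) i (Finset.mem_univ i)
        exact_mod_cast congrArg (fun x : ℕ => (x : ℚ)) this
      rw [Finset.sum_congr rfl fun i _ => hz i, Finset.sum_const_zero, zero_div, zero_mul]
    · rw [IH (n-m) (by omega) (∑ i, K i) (by omega) _]
      rw [if_pos (by
        rw [Finset.sum_tsub_distrib Finset.univ fun i _ => hKb i]
        have hKle : ∑ i, K i ≤ ∑ i, b i := Finset.sum_le_sum fun i _ => hKb i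
        omega)]
      have hprod : ∏ i, gfun m (n-m) (b i) (K i)
          = (∏ i, (m.choose (K i) : ℚ)) * ∏ i, (((n - m).choose (b i - K i) : ℕ) : ℚ) := by
        rw [show ∏ i, gfun m (n-m) (b i) (K i)
            = ∏ i, ((m.choose (K i) : ℚ) * (((n - m).choose (b i - K i) : ℕ) : ℚ)) from
          Finset.prod_congr rfl fun i _ => by rw [gfun, if_pos (hKb i)]]
        exact Finset.prod_mul_distrib
      rw [hprod]
      have hcast : ((∑ i, K i : ℕ) : ℚ) = ∑ i, (K i : ℚ) := by push_cast; rfl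
      rw [hcast]
      ring
  rw [Finset.sum_congr rfl step1]
  -- Step 2 : exchange the sums
  have swap : ∑ K ∈ Fintype.piFinset (fun _ : Fin t => range (m+1)), ((∑ i, (K i : ℚ)) / ((n - m : ℕ) : ℚ)) * ∏ i, gfun m (n-m) (b i) (K i)
      = (((n - m : ℕ) : ℚ))⁻¹ *
          ∑ j : Fin t, ∑ K ∈ Fintype.piFinset (fun _ : Fin t => range (m+1)), (K j : ℚ) * ∏ i, gfun m (n-m) (b i) (K i) := by
    calc ∑ K ∈ Fintype.piFinset (fun _ : Fin t => range (m+1)), ((∑ i, (K i : ℚ)) / ((n - m : ℕ) : ℚ)) * ∏ i, gfun m (n-m) (b i) (K i)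
        = ∑ K ∈ Fintype.piFinset (fun _ : Fin t => range (m+1)), ∑ j : Fin t,
            (((n - m : ℕ) : ℚ))⁻¹ * ((K j : ℚ) * ∏ i, gfun m (n-m) (b i) (K i)) := by
          refine Finset.sum_congr rfl fun K _ => ?_
          rw [← Finset.mul_sum, ← Finset.sum_mul]
          ring
      _ = ∑ j : Fin t, ∑ K ∈ Fintype.piFinset (fun _ : Fin t => range (m+1)),
            (((n - m : ℕ) : ℚ))⁻¹ * ((K j : ℚ) * ∏ i, gfun m (n-m) (b i) (K i)) :=
          Finset.sum_comm
      _ = _ := by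
          rw [Finset.mul_sum]
          exact Finset.sum_congr rfl fun j _ => (Finset.mul_sum _ _ _).symm
  rw [swap]
  -- Step 3 : factor each inner sum as a product of one-dimensional sums
  have factor : ∀ j : Fin t,
      ∑ K ∈ Fintype.piFinset (fun _ : Fin t => range (m+1)), (K j : ℚ) * ∏ i, gfun m (n-m) (b i) (K i)
      = (∑ k ∈ range (m+1), (k : ℚ) * gfun m (n-m) (b j) k) *
          ∏ i ∈ Finset.univ.erase j, (∑ k ∈ range (m+1), gfun m (n-m) (b i) k) := by
    intro j
    calc ∑ K ∈ Fintype.piFinset (fun _ : Fin t => range (m+1)), (K j : ℚ) * ∏ i, gfun m (n-m) (b i) (K i)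
        = ∑ K ∈ Fintype.piFinset (fun _ : Fin t => range (m+1)), ∏ i, ((if i = j then (K i : ℚ) else 1) * gfun m (n-m) (b i) (K i)) := by
          refine Finset.sum_congr rfl fun K _ => ?_
          rw [show ∏ i, ((if i = j then (K i : ℚ) else 1) * gfun m (n-m) (b i) (K i))
              = (∏ i, (if i = j then (K i : ℚ) else 1)) * ∏ i, gfun m (n-m) (b i) (K i) from
            Finset.prod_mul_distrib]
          rw [Finset.prod_ite_eq' Finset.univ j (fun i => (K i : ℚ)),
            if_pos (Finset.mem_univ j)]
      _ = ∏ i, ∑ k ∈ range (m+1), ((if i = j then (k : ℚ) else 1) * gfun m (n-m) (b i) k) :=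
          Finset.sum_prod_piFinset (range (m+1))
            (fun i k => (if i = j then (k : ℚ) else 1) * gfun m (n-m) (b i) k)
      _ = (∑ k ∈ range (m+1), ((if (j:Fin t) = j then (k : ℚ) else 1) * gfun m (n-m) (b j) k)) *
            ∏ i ∈ Finset.univ.erase j,
              ∑ k ∈ range (m+1), ((if i = j then (k : ℚ) else 1) * gfun m (n-m) (b i) k) :=
          (Finset.mul_prod_erase Finset.univ _ (Finset.mem_univ j)).symm
      _ = _ := by
          congr 1
          · exact Finset.sum_congr rfl fun k _ => by rw [if_pos rfl]
          · refine Finset.prod_congr rfl fun i hi => Finset.sum_congr rfl fun k _ => ?_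
            rw [if_neg (Finset.mem_erase.1 hi).1, one_mul]
  rw [Finset.sum_congr rfl fun j _ => factor j]
  -- Step 4 : evaluate the one-dimensional sums
  have hmM : m + (n - m) = n := by omega
  have hmM' : m - 1 + (n - m) = n - 1 := by omega
  have Sg : ∀ i : Fin t, ∑ k ∈ range (m+1), gfun m (n-m) (b i) k = (n.choose (b i) : ℚ) := by
    intro i
    rw [gfun_sum, hmM]
  have Sg' : ∀ j : Fin t, ∑ k ∈ range (m+1), (k : ℚ) * gfun m (n-m) (b j) k
      = (m : ℚ) * (if 1 ≤ b j then ((n-1).choose (b j - 1) : ℚ) else 0) := by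
    intro j
    rw [gfun_sum' m (n-m) (b j) hm, hmM']
  rw [Finset.sum_congr rfl fun j _ => by
    rw [Sg' j, Finset.prod_congr rfl fun i _ => Sg i]]
  -- Step 5 : absorption identity and conclusion
  have habs : ∀ j : Fin t,
      (m : ℚ) * (if 1 ≤ b j then ((n-1).choose (b j - 1) : ℚ) else 0) *
          ∏ i ∈ Finset.univ.erase j, (n.choose (b i) : ℚ)
      = ((m : ℚ) / (n : ℚ)) * (b j : ℚ) * ∏ i, (n.choose (b i) : ℚ) := by
    intro j
    by_cases hbj : 1 ≤ b j
    · rw [if_pos hbj]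
      have habs' : (n : ℚ) * ((n-1).choose (b j - 1) : ℚ)
          = (b j : ℚ) * (n.choose (b j) : ℚ) := by
        have h := Nat.add_one_mul_choose_eq (n-1) (b j - 1)
        rw [show n-1+1 = n by omega, show b j - 1 + 1 = b j by omega,
          mul_comm (n.choose (b j))] at h
        exact_mod_cast h
      have hD : ((n-1).choose (b j - 1) : ℚ) = (b j : ℚ) * (n.choose (b j) : ℚ) / (n : ℚ) := by
        field_simp
        linarith [habs']
      rw [hD, ← Finset.mul_prod_erase Finset.univ (fun i => (n.choose (b i) : ℚ))
        (Finset.mem_univ j)]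
      field_simp
    · rw [if_neg hbj]
      have hbz : b j = 0 := by omega
      rw [hbz]
      push_cast
      ring
  rw [Finset.sum_congr rfl fun j _ => habs j]
  rw [show ∑ j : Fin t, ((m : ℚ) / (n : ℚ)) * (b j : ℚ) * ∏ i, (n.choose (b i) : ℚ)
      = ((m : ℚ) / (n : ℚ)) * (∑ j : Fin t, (b j : ℚ)) * ∏ i, (n.choose (b i) : ℚ) by
    rw [Finset.sum_congr rfl (fun j _ => mul_assoc ((m:ℚ)/(n:ℚ)) _ _), ← Finset.mul_sum,
      ← Finset.sum_mul]
    exact (mul_assoc _ _ _).symm]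
  have hcast : ∑ j : Fin t, (b j : ℚ) = ((n - m : ℕ) : ℚ) := by
    rw [← hbM]
    push_cast
    rfl
  rw [hcast]
  rw [show ((n - m : ℕ) : ℚ)⁻¹ *
        ((m : ℚ) / (n : ℚ) * ((n - m : ℕ) : ℚ) * ∏ i, (n.choose (b i) : ℚ))
      = (((n - m : ℕ) : ℚ)⁻¹ * ((n - m : ℕ) : ℚ)) *
          ((m : ℚ) / (n : ℚ) * ∏ i, (n.choose (b i) : ℚ)) from by ring,
    inv_mul_cancel₀ hMne, one_mul]

end Key

section Final

lemma sum_range_indicator (m T : ℕ) :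
    ∑ i ∈ range T, (if i < m then (1:ℕ) else 0) = min m T := by
  induction T with
  | zero => simp
  | succ T ih =>
    rw [Finset.sum_range_succ, ih]
    split_ifs <;> omega

/-- Let `G` be a formal power series in `x, y_1, …, y_t` over `ℚ`
(variable `0` is `x`, variable `i.succ` is `y_i`) with zero constant term satisfying
`G = x·∏_{i=1}^t (1 + y_i·G)`, and let `1 ≤ m ≤ t`. Then for every `n ≥ m` and every
tuple `a` with `∑ a_i = n` and `a_i ≥ 1` for all `i ≤ m` (as indices `1, …, m`),
the coefficient of `x^n·y_1^{a_1}⋯y_t^{a_t}` in `y_1⋯y_m·G^m` equals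
`(m/n)·C(n,a_1−1)⋯C(n,a_m−1)·C(n,a_{m+1})⋯C(n,a_t)`. -/
theorem tary_forest_gf_coeff (t : ℕ) (ht : 1 ≤ t)
    (G : MvPowerSeries (Fin (t + 1)) ℚ)
    (hG0 : MvPowerSeries.constantCoeff G = 0)
    (hG : G = MvPowerSeries.X 0 * ∏ i : Fin t, (1 + MvPowerSeries.X i.succ * G))
    (m : ℕ) (hm : 1 ≤ m) (hmt : m ≤ t)
    (n : ℕ) (hn : m ≤ n) (a : Fin t → ℕ) (ha : ∑ i, a i = n)
    (hpos : ∀ i : Fin t, (i : ℕ) < m → 1 ≤ a i) :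
    MvPowerSeries.coeff (Finsupp.equivFunOnFinite.symm (Fin.cons n a))
        ((∏ i ∈ Finset.univ.filter (fun i : Fin t => (i : ℕ) < m),
            MvPowerSeries.X i.succ) * G ^ m) =
      (m / n : ℚ) *
        ∏ i : Fin t,
          (if (i : ℕ) < m then (n.choose (a i - 1) : ℚ) else (n.choose (a i) : ℚ)) := by
  set w : Fin t → ℕ := fun i => if (i : ℕ) < m then 1 else 0 with hw
  have hwsum : ∑ i, w i = m := by
    rw [hw, Fin.sum_univ_eq_sum_range (fun i => if i < m then (1:ℕ) else 0) t,
      sum_range_indicator]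
    omega
  have hwa : ∀ i, w i ≤ a i := by
    intro i
    rw [hw]
    by_cases h : (i : ℕ) < m
    · simpa [h] using hpos i h
    · simp [h]
  have hpre : (∏ i ∈ Finset.univ.filter (fun i : Fin t => (i : ℕ) < m),
      (MvPowerSeries.X i.succ : MvPowerSeries (Fin (t+1)) ℚ))
      = MvPowerSeries.monomial (E t 0 w) 1 := by
    rw [← mono_prod 0 w, pow_zero, one_mul, Finset.prod_filter]
    apply Finset.prod_congr rfl
    intro i _
    rw [hw]
    by_cases h : (i : ℕ) < m
    · simp [h]
    · simp [h]
  have hE : Finsupp.equivFunOnFinite.symm (Fin.cons n a) = E t n a := rfl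
  rw [hE, hpre, MvPowerSeries.coeff_monomial_mul,
    if_pos ((E_le_iff 0 n w a).2 ⟨Nat.zero_le n, hwa⟩), one_mul, E_sub]
  rw [Nat.sub_zero, key G hG n m hm (fun i => a i - w i)]
  have hsum : ∑ i, (a i - w i) = n - m := by
    rw [Finset.sum_tsub_distrib Finset.univ fun i _ => hwa i, ha, hwsum]
  rw [if_pos (by omega)]
  congr 1
  apply Finset.prod_congr rfl
  intro i _
  rw [hw]
  by_cases h : (i : ℕ) < m
  · simp [h]
  · simp [h]

end Final
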